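/- For any integers $k \ge 2$ and $m \ge 1$, one has $\sum_{\substack{n_1,\dots,n_{2k} \le x \\ n_1\cdots n_{2k} = \square}} \mu^2(n_1)\cdots\mu^2(n_{2k})\, m^{(\omega(n_1)+\dots+\omega(n_{2k}))/2} \ll_{k,m} x^k (\log x)^{m\binom{2k}{2} - 2k}$, where the sum runs over $2k$-tuples of squarefree integers whose product is a perfect square. -/

import Mathlib

namespace Stmt16Aux

/-! ### Pairing index machinery -/

def pidx (j : ℕ) : ℕ := if j % 2 = 0 then j + 1 else j - 1

lemma pidx_lt {n j : ℕ} (hn : Even n) (hj : j < n) : pidx j < n := by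
  rcases hn with ⟨c, rfl⟩; unfold pidx; split <;> omega

lemma pidx_pidx (j : ℕ) : pidx (pidx j) = j := by
  unfold pidx; split <;> split <;> omega

lemma pidx_ne (j : ℕ) : pidx j ≠ j := by
  unfold pidx; split <;> omega

variable {α : Type*} [LinearOrder α]

/-- partner of `i` in `F` (consecutive pairing in sorted order), defined when
`F.card` is even and `i ∈ F`, else `i` itself. -/
def ptn (F : Finset α) (i : α) : α :=
  if h : Even F.card ∧ i ∈ F then
    (F.orderIsoOfFin rfl ⟨pidx ((F.orderIsoOfFin rfl).symm ⟨i, h.2⟩).val,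
      pidx_lt h.1 (((F.orderIsoOfFin rfl).symm ⟨i, h.2⟩).isLt)⟩ : F)
  else i

lemma ptn_mem {F : Finset α} (hF : Even F.card) {i : α} (hi : i ∈ F) :
    ptn F i ∈ F := by
  rw [ptn, dif_pos ⟨hF, hi⟩]; exact Subtype.coe_prop _

lemma ptn_ne {F : Finset α} (hF : Even F.card) {i : α} (hi : i ∈ F) :
    ptn F i ≠ i := by
  rw [ptn, dif_pos ⟨hF, hi⟩]
  intro h
  have h2 : (F.orderIsoOfFin rfl ⟨pidx ((F.orderIsoOfFin rfl).symm ⟨i, hi⟩).val,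
      pidx_lt hF (((F.orderIsoOfFin rfl).symm ⟨i, hi⟩).isLt)⟩ : F)
      = (⟨i, hi⟩ : F) := Subtype.ext h
  have h3 := congrArg (F.orderIsoOfFin rfl).symm h2
  rw [OrderIso.symm_apply_apply] at h3
  have h4 := congrArg Fin.val h3
  simp only at h4
  exact pidx_ne _ h4

lemma ptn_eq {F : Finset α} (hF : Even F.card) {i : α} (hi : i ∈ F) :
    ptn F i = (F.orderIsoOfFin rfl ⟨pidx ((F.orderIsoOfFin rfl).symm ⟨i, hi⟩).val,
      pidx_lt hF (((F.orderIsoOfFin rfl).symm ⟨i, hi⟩).isLt)⟩ : F) :=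
  dif_pos ⟨hF, hi⟩

lemma ptn_ptn {F : Finset α} (hF : Even F.card) {i : α} (hi : i ∈ F) :
    ptn F (ptn F i) = i := by
  have hmem := ptn_mem hF hi
  rw [ptn_eq hF hmem]
  have h1 : (⟨ptn F i, hmem⟩ : F) = F.orderIsoOfFin rfl
      ⟨pidx ((F.orderIsoOfFin rfl).symm ⟨i, hi⟩).val,
        pidx_lt hF (((F.orderIsoOfFin rfl).symm ⟨i, hi⟩).isLt)⟩ :=
    Subtype.ext (ptn_eq hF hi)
  have h2 : (F.orderIsoOfFin rfl).symm ⟨ptn F i, hmem⟩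
      = ⟨pidx ((F.orderIsoOfFin rfl).symm ⟨i, hi⟩).val,
        pidx_lt hF (((F.orderIsoOfFin rfl).symm ⟨i, hi⟩).isLt)⟩ := by
    rw [h1, OrderIso.symm_apply_apply]
  have h3 : (⟨pidx ((F.orderIsoOfFin rfl).symm ⟨ptn F i, hmem⟩).val,
      pidx_lt hF (((F.orderIsoOfFin rfl).symm ⟨ptn F i, hmem⟩).isLt)⟩ : Fin F.card)
      = (F.orderIsoOfFin rfl).symm ⟨i, hi⟩ := by
    apply Fin.ext
    simp only [h2, pidx_pidx]
  rw [h3, OrderIso.apply_symm_apply]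

/-! ### The edge type -/

/-- edges of the complete graph on `Fin n` -/
abbrev EV (n : ℕ) := {e : Fin n × Fin n // e.1 < e.2}

def evEquiv (n : ℕ) : EV n ≃ Σ j : Fin n, Fin j.val where
  toFun e := ⟨e.1.2, ⟨e.1.1.val, e.2⟩⟩
  invFun p := ⟨(⟨p.2.val, lt_trans p.2.isLt p.1.isLt⟩, p.1), p.2.isLt⟩
  left_inv e := rfl
  right_inv p := rfl

lemma card_EV (n : ℕ) : Fintype.card (EV n) = n.choose 2 := by
  rw [Fintype.card_congr (evEquiv n), Fintype.card_sigma]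
  simp only [Fintype.card_fin]
  rw [Fin.sum_univ_eq_sum_range (fun j => j) n]
  rw [Nat.choose_two_right]
  have := Finset.sum_range_id_mul_two n
  omega

/-- edges incident to a vertex -/
def EdgesAt {n : ℕ} (v : Fin n) : Finset (EV n) :=
  Finset.univ.filter (fun e => e.1.1 = v ∨ e.1.2 = v)

/-- double counting: summing over vertices the incident-edge sums counts each edge twice -/
lemma sum_edgesAt_sum {n : ℕ} (g : EV n → ℕ) :
    ∑ v : Fin n, ∑ e ∈ EdgesAt v, g e = 2 * ∑ e : EV n, g e := by
  have h : ∀ v : Fin n, ∑ e ∈ EdgesAt v, g e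
      = ∑ e : EV n, if e.1.1 = v ∨ e.1.2 = v then g e else 0 := by
    intro v; rw [EdgesAt, Finset.sum_filter]
  simp only [h]
  rw [Finset.sum_comm]
  rw [Finset.mul_sum]
  apply Finset.sum_congr rfl
  intro e _
  have : (Finset.univ.filter (fun v : Fin n => e.1.1 = v ∨ e.1.2 = v))
      = {e.1.1, e.1.2} := by
    ext v; simp [eq_comm, or_comm]
  rw [← Finset.sum_filter, this, Finset.sum_pair (ne_of_lt e.2)]
  omega

lemma primeFactors_card_prod_le {β : Type*} (s : Finset β) (f : β → ℕ)
    (hf : ∀ b ∈ s, f b ≠ 0) :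
    (∏ b ∈ s, f b).primeFactors.card ≤ ∑ b ∈ s, (f b).primeFactors.card := by
  classical
  induction s using Finset.induction_on with
  | empty => simp
  | insert a s' hnot ih =>
    rw [Finset.prod_insert hnot, Finset.sum_insert hnot]
    have ha : f a ≠ 0 := hf a (Finset.mem_insert_self a s')
    have hs : (∏ b ∈ s', f b) ≠ 0 :=
      Finset.prod_ne_zero_iff.mpr (fun b hb => hf b (Finset.mem_insert_of_mem hb))
    rw [Nat.primeFactors_mul ha hs]
    calc ((f a).primeFactors ∪ (∏ b ∈ s', f b).primeFactors).card
        ≤ (f a).primeFactors.card + (∏ b ∈ s', f b).primeFactors.card :=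
          Finset.card_union_le _ _
      _ ≤ _ := by
          have := ih (fun b hb => hf b (Finset.mem_insert_of_mem hb))
          omega

/-! ### Decomposition of a squarefree tuple with square product into edge parts -/

section Decomp

variable {n : ℕ} (t : Fin n → ℕ)

/-- vertices whose component is divisible by `p` -/
def Fp (p : ℕ) : Finset (Fin n) := Finset.univ.filter (fun i => p ∣ t i)

variable (hsf : ∀ i, Squarefree (t i)) (hsq : IsSquare (∏ i, t i))

include hsf in
lemma tne (i : Fin n) : t i ≠ 0 := (hsf i).ne_zero

include hsf hsq in
lemma even_card_Fp {p : ℕ} (hp : p.Prime) : Even (Fp t p).card := by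
  obtain ⟨s, hs⟩ := hsq
  have hprod_ne : (∏ i, t i) ≠ 0 := Finset.prod_ne_zero_iff.mpr (fun i _ => tne t hsf i)
  have hs0 : s ≠ 0 := by
    intro h; rw [h, mul_zero] at hs; exact hprod_ne hs
  have h1 : (∏ i, t i).factorization p = ∑ i, (t i).factorization p := by
    rw [Nat.factorization_prod (fun i _ => tne t hsf i)]
    exact Finset.sum_apply' p
  have h2 : ∀ i, (t i).factorization p = if p ∣ t i then 1 else 0 := by
    intro i
    split
    · rename_i hdvd
      have hle : (t i).factorization p ≤ 1 :=
        Squarefree.natFactorization_le_one p (hsf i)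
      have hpos : 0 < (t i).factorization p :=
        Nat.Prime.factorization_pos_of_dvd hp (tne t hsf i) hdvd
      omega
    · rename_i hdvd
      by_contra h
      exact hdvd (Nat.dvd_of_factorization_pos h)
  have h3 : (∏ i, t i).factorization p = (Fp t p).card := by
    rw [h1, Fp, Finset.card_filter]
    simp only [h2]
  have h4 : (∏ i, t i).factorization p = 2 * s.factorization p := by
    rw [hs, Nat.factorization_mul hs0 hs0]; simp; ring
  rw [← h3, h4]
  exact even_two_mul _

/-- the part of `t i` paired with vertex `j` -/
def dd (i j : Fin n) : ℕ :=
  ∏ p ∈ (t i).primeFactors.filter (fun p => ptn (Fp t p) i = j), p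

include hsf hsq in
lemma mem_aux {p : ℕ} {i : Fin n} (hp : p ∈ (t i).primeFactors) :
    Even (Fp t p).card ∧ i ∈ Fp t p := by
  rw [Nat.mem_primeFactors] at hp
  exact ⟨even_card_Fp t hsf hsq hp.1,
    Finset.mem_filter.mpr ⟨Finset.mem_univ i, hp.2.1⟩⟩

include hsf hsq in
lemma dd_symm (i j : Fin n) : dd t i j = dd t j i := by
  unfold dd
  apply Finset.prod_congr _ (fun _ _ => rfl)
  ext p
  simp only [Finset.mem_filter]
  constructor
  · rintro ⟨hpf, hptn⟩
    obtain ⟨hev, hiF⟩ := mem_aux t hsf hsq hpf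
    have hjF : j ∈ Fp t p := hptn ▸ ptn_mem hev hiF
    have hpprime : p.Prime := (Nat.mem_primeFactors.mp hpf).1
    have hdvd : p ∣ t j := (Finset.mem_filter.mp hjF).2
    refine ⟨Nat.mem_primeFactors.mpr ⟨hpprime, hdvd, tne t hsf j⟩, ?_⟩
    rw [← hptn, ptn_ptn hev hiF]
  · rintro ⟨hpf, hptn⟩
    obtain ⟨hev, hjF⟩ := mem_aux t hsf hsq hpf
    have hiF : i ∈ Fp t p := hptn ▸ ptn_mem hev hjF
    have hpprime : p.Prime := (Nat.mem_primeFactors.mp hpf).1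
    have hdvd : p ∣ t i := (Finset.mem_filter.mp hiF).2
    refine ⟨Nat.mem_primeFactors.mpr ⟨hpprime, hdvd, tne t hsf i⟩, ?_⟩
    rw [← hptn, ptn_ptn hev hjF]

include hsf hsq in
lemma prod_dd (i : Fin n) : ∏ j ∈ Finset.univ.erase i, dd t i j = t i := by
  unfold dd
  rw [Finset.prod_fiberwise_of_maps_to (fun p hp => ?_) (fun p => p)]
  · exact Nat.prod_primeFactors_of_squarefree (hsf i)
  · obtain ⟨hev, hiF⟩ := mem_aux t hsf hsq hp
    exact Finset.mem_erase.mpr ⟨ptn_ne hev hiF, Finset.mem_univ _⟩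

include hsf in
lemma dd_dvd (i j : Fin n) : dd t i j ∣ t i := by
  have h1 : dd t i j ∣ ∏ p ∈ (t i).primeFactors, p :=
    Finset.prod_dvd_prod_of_subset _ _ _ (Finset.filter_subset _ _)
  rwa [Nat.prod_primeFactors_of_squarefree (hsf i)] at h1

include hsf in
lemma dd_sqfree (i j : Fin n) : Squarefree (dd t i j) :=
  (hsf i).squarefree_of_dvd (dd_dvd t hsf i j)

/-- the edge decomposition -/
def dE (e : EV n) : ℕ := dd t e.1.1 e.1.2

include hsf hsq in
lemma prod_edgesAt (v : Fin n) : ∏ e ∈ EdgesAt v, dE t e = t v := by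
  rw [← prod_dd t hsf hsq v]
  refine Finset.prod_bij' (fun e (_ : e ∈ EdgesAt v) => if e.1.1 = v then e.1.2 else e.1.1)
    (fun j hj => if h : v < j then ⟨(v, j), h⟩ else
      ⟨(j, v), lt_of_le_of_ne (le_of_not_gt h) (Finset.ne_of_mem_erase hj)⟩)
    ?_ ?_ ?_ ?_ ?_
  · intro e he
    simp only [EdgesAt, Finset.mem_filter] at he
    have hlt := e.2
    by_cases h : e.1.1 = v
    · simp only [if_pos h]
      exact Finset.mem_erase.mpr ⟨ne_of_gt (h ▸ hlt), Finset.mem_univ _⟩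
    · have h2 : e.1.2 = v := he.2.resolve_left h
      simp only [if_neg h]
      exact Finset.mem_erase.mpr ⟨fun hc => absurd (h2 ▸ hc ▸ hlt) (lt_irrefl _),
        Finset.mem_univ _⟩
  · intro j hj
    by_cases h : v < j
    · rw [dif_pos h]
      exact Finset.mem_filter.mpr ⟨Finset.mem_univ _, Or.inl rfl⟩
    · rw [dif_neg h]
      exact Finset.mem_filter.mpr ⟨Finset.mem_univ _, Or.inr rfl⟩
  · intro e he
    simp only [EdgesAt, Finset.mem_filter] at he
    have hlt := e.2
    by_cases h : e.1.1 = v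
    · simp only [if_pos h]
      rw [dif_pos (h ▸ hlt)]
      exact Subtype.ext (Prod.ext h.symm rfl)
    · have h2 : e.1.2 = v := he.2.resolve_left h
      simp only [if_neg h]
      rw [dif_neg (by rw [h2] at hlt; exact lt_asymm hlt)]
      exact Subtype.ext (Prod.ext rfl h2.symm)
  · intro j hj
    by_cases h : v < j
    · rw [dif_pos h]
      simp
    · rw [dif_neg h]
      simp only
      rw [if_neg (show (j, v).1 ≠ v from Finset.ne_of_mem_erase hj)]
  · intro e he
    simp only [EdgesAt, Finset.mem_filter] at he
    by_cases h : e.1.1 = v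
    · simp only [if_pos h]
      unfold dE
      rw [h]
    · have h2 : e.1.2 = v := he.2.resolve_left h
      simp only [if_neg h]
      unfold dE
      rw [h2]
      exact dd_symm t hsf hsq _ _

include hsf hsq in
lemma dE_dvd_t (e : EV n) (v : Fin n) (hv : e.1.1 = v ∨ e.1.2 = v) :
    dE t e ∣ t v := by
  rw [← prod_edgesAt t hsf hsq v]
  exact Finset.dvd_prod_of_mem _ (Finset.mem_filter.mpr ⟨Finset.mem_univ _, hv⟩)

include hsf hsq in
lemma dE_sqfree (e : EV n) : Squarefree (dE t e) := dd_sqfree t hsf _ _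

include hsf hsq in
lemma dE_ne_zero (e : EV n) : dE t e ≠ 0 := (dE_sqfree t hsf hsq e).ne_zero

include hsf hsq in
lemma omega_sum_le : ∑ v, (t v).primeFactors.card
    ≤ 2 * ∑ e : EV n, (dE t e).primeFactors.card := by
  rw [← sum_edgesAt_sum]
  apply Finset.sum_le_sum
  intro v _
  calc (t v).primeFactors.card
      = (∏ e ∈ EdgesAt v, dE t e).primeFactors.card := by
        rw [prod_edgesAt t hsf hsq v]
    _ ≤ _ := primeFactors_card_prod_le _ _ (fun e _ => dE_ne_zero t hsf hsq e)

end Decomp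

/-! ### The lattice-point count dominating the sum -/

section Count

variable {n : ℕ} (m X : ℕ)

/-- indices incident to a vertex -/
def EvI (v : Fin n) : Finset (EV n × Fin m) := (EdgesAt v) ×ˢ Finset.univ

/-- recover the tuple from the lattice point -/
def Rmap (c : EV n × Fin m → ℕ) : Fin n → ℕ := fun v => ∏ idx ∈ EvI m v, c idx

/-- the lattice points -/
def S2 : Finset (EV n × Fin m → ℕ) :=
  (Fintype.piFinset fun _ => Finset.Icc 1 X).filter (fun c => ∀ v, Rmap m c v ≤ X)

lemma fiber_card_ge (hm : 1 ≤ m) (t : Fin n → ℕ)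
    (hsf : ∀ i, Squarefree (t i)) (hsq : IsSquare (∏ i, t i))
    (ht : t ∈ Fintype.piFinset fun _ : Fin n => Finset.Icc 1 X) :
    m ^ ((∑ v, (t v).primeFactors.card) / 2)
      ≤ ((S2 m X).filter (fun c => Rmap m c = t)).card := by
  classical
  set D := fun e : EV n => dE t e with hD
  have hDsq : ∀ e, Squarefree (D e) := fun e => dE_sqfree t hsf hsq e
  -- the injection
  set Φ : ((Σ e : EV n, ↥((D e).primeFactors)) → Fin m) → (EV n × Fin m → ℕ) :=
    fun φ idx => ∏ p ∈ (D idx.1).primeFactors.attach.filter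
      (fun p => φ ⟨idx.1, p⟩ = idx.2), (p : ℕ) with hΦ
  have hprodattach : ∀ e : EV n, ∏ p ∈ (D e).primeFactors.attach, (p : ℕ) = D e := by
    intro e
    exact (Finset.prod_attach _ (fun p => p)).trans
      (Nat.prod_primeFactors_of_squarefree (hDsq e))
  have hΦprod : ∀ φ (e : EV n), ∏ r : Fin m, Φ φ (e, r) = D e := by
    intro φ e
    rw [← hprodattach e]
    simp only [hΦ]
    exact Finset.prod_fiberwise_of_maps_to (fun p _ => Finset.mem_univ _) _
  have hΦdvd : ∀ φ idx, Φ φ idx ∣ D idx.1 := by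
    intro φ idx
    rw [← hprodattach idx.1]
    exact Finset.prod_dvd_prod_of_subset _ _ _ (Finset.filter_subset _ _)
  have htX : ∀ v, t v ∈ Finset.Icc 1 X := fun v => Fintype.mem_piFinset.mp ht v
  have hDdt : ∀ idx : EV n × Fin m, D idx.1 ∣ t idx.1.1.1 :=
    fun idx => dE_dvd_t t hsf hsq idx.1 _ (Or.inl rfl)
  have hR : ∀ φ, Rmap m (Φ φ) = t := by
    intro φ
    funext v
    rw [Rmap, EvI, Finset.prod_product]
    calc ∏ e ∈ EdgesAt v, ∏ r : Fin m, Φ φ (e, r)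
        = ∏ e ∈ EdgesAt v, D e := Finset.prod_congr rfl (fun e _ => hΦprod φ e)
      _ = t v := prod_edgesAt t hsf hsq v
  have hmem : ∀ φ, Φ φ ∈ (S2 m X).filter (fun c => Rmap m c = t) := by
    intro φ
    refine Finset.mem_filter.mpr ⟨Finset.mem_filter.mpr ⟨?_, ?_⟩, hR φ⟩
    · rw [Fintype.mem_piFinset]
      intro idx
      rw [Finset.mem_Icc]
      constructor
      · rw [Nat.one_le_iff_ne_zero]
        apply Finset.prod_ne_zero_iff.mpr
        intro p _
        exact (Nat.prime_of_mem_primeFactors p.coe_prop).ne_zero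
      · have h1 : Φ φ idx ∣ t idx.1.1.1 := (hΦdvd φ idx).trans (hDdt idx)
        have h2 := Finset.mem_Icc.mp (htX idx.1.1.1)
        exact le_trans (Nat.le_of_dvd (by omega) h1) h2.2
    · intro v
      rw [hR φ]
      exact (Finset.mem_Icc.mp (htX v)).2
  have hinj : Function.Injective Φ := by
    intro φ φ' heq
    funext ⟨e, p⟩
    by_contra hne
    have hp1 : p ∈ (D e).primeFactors.attach.filter (fun q => φ ⟨e, q⟩ = φ ⟨e, p⟩) :=
      Finset.mem_filter.mpr ⟨Finset.mem_attach _ _, rfl⟩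
    have hdvd1 : (p : ℕ) ∣ Φ φ (e, φ ⟨e, p⟩) := Finset.dvd_prod_of_mem _ hp1
    rw [hΦ] at hdvd1
    have hdvd2 : (p : ℕ) ∣ Φ φ' (e, φ ⟨e, p⟩) := by rw [← heq]; exact hdvd1
    have hpp : Prime (p : ℕ) := (Nat.prime_of_mem_primeFactors p.coe_prop).prime
    obtain ⟨q, hq, hpq⟩ := (Prime.dvd_finset_prod_iff hpp _).mp hdvd2
    rw [Finset.mem_filter] at hq
    have hqq : Nat.Prime (q : ℕ) := Nat.prime_of_mem_primeFactors q.coe_prop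
    have : (p : ℕ) = (q : ℕ) := (Nat.prime_dvd_prime_iff_eq hpp.nat_prime hqq).mp hpq
    have hpq2 : p = q := Subtype.ext this
    rw [← hpq2] at hq
    exact hne hq.2.symm
  calc m ^ ((∑ v, (t v).primeFactors.card) / 2)
      ≤ m ^ (∑ e : EV n, (D e).primeFactors.card) := by
        apply Nat.pow_le_pow_right hm
        have h0 := omega_sum_le t hsf hsq
        simp only [hD]
        omega
    _ = Fintype.card ((Σ e : EV n, ↥((D e).primeFactors)) → Fin m) := by
        rw [Fintype.card_fun, Fintype.card_fin, Fintype.card_sigma]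
        congr 1
        exact (Finset.sum_congr rfl (fun e _ => (Fintype.card_coe _).symm))
    _ = (Finset.univ : Finset ((Σ e : EV n, ↥((D e).primeFactors)) → Fin m)).card :=
        Finset.card_univ.symm
    _ ≤ _ := Finset.card_le_card_of_injOn Φ (fun φ _ => hmem φ) hinj.injOn

end Count

section Assemble

variable {n : ℕ} (m X : ℕ)

lemma Rmap_mem_pi {c : EV n × Fin m → ℕ} (hc : c ∈ S2 m X) :
    Rmap m c ∈ Fintype.piFinset fun _ : Fin n => Finset.Icc 1 X := by
  rw [Fintype.mem_piFinset]
  intro v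
  rw [Finset.mem_Icc]
  obtain ⟨hpi, hcon⟩ := Finset.mem_filter.mp hc
  refine ⟨?_, hcon v⟩
  rw [Nat.one_le_iff_ne_zero, Rmap]
  apply Finset.prod_ne_zero_iff.mpr
  intro idx _
  have := Finset.mem_Icc.mp (Fintype.mem_piFinset.mp hpi idx)
  omega

lemma sum_le_S2_card (hm : 1 ≤ m) :
    (∑ t ∈ Fintype.piFinset (fun _ : Fin n => Finset.Icc 1 X),
      if IsSquare (∏ i, t i) then
        (∏ i, if Squarefree (t i) then (1 : ℝ) else 0) *
          (m : ℝ) ^ ((∑ i, (t i).primeFactors.card) / 2)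
      else 0) ≤ ((S2 (n := n) m X).card : ℝ) := by
  classical
  have key : ∀ t ∈ Fintype.piFinset (fun _ : Fin n => Finset.Icc 1 X),
      (if IsSquare (∏ i, t i) then
        (∏ i, if Squarefree (t i) then (1 : ℝ) else 0) *
          (m : ℝ) ^ ((∑ i, (t i).primeFactors.card) / 2)
      else 0) ≤ (((S2 m X).filter (fun c => Rmap m c = t)).card : ℝ) := by
    intro t ht
    by_cases hsq : IsSquare (∏ i, t i)
    · rw [if_pos hsq]
      by_cases hsf : ∀ i, Squarefree (t i)
      · rw [Finset.prod_congr rfl (fun i _ => if_pos (hsf i)), Finset.prod_const_one,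
          one_mul]
        have := fiber_card_ge m X hm t hsf hsq ht
        calc (m : ℝ) ^ ((∑ i, (t i).primeFactors.card) / 2)
            = ((m ^ ((∑ i, (t i).primeFactors.card) / 2) : ℕ) : ℝ) := by
              push_cast; ring
          _ ≤ _ := Nat.cast_le.mpr this
      · push_neg at hsf
        obtain ⟨i, hi⟩ := hsf
        rw [Finset.prod_eq_zero (Finset.mem_univ i)
          (if_neg hi : (if Squarefree (t i) then (1 : ℝ) else 0) = 0), zero_mul]
        positivity
    · rw [if_neg hsq]
      positivity
  calc (∑ t ∈ Fintype.piFinset (fun _ : Fin n => Finset.Icc 1 X),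
      if IsSquare (∏ i, t i) then
        (∏ i, if Squarefree (t i) then (1 : ℝ) else 0) *
          (m : ℝ) ^ ((∑ i, (t i).primeFactors.card) / 2)
      else 0)
      ≤ ∑ t ∈ Fintype.piFinset (fun _ : Fin n => Finset.Icc 1 X),
          (((S2 m X).filter (fun c => Rmap m c = t)).card : ℝ) :=
        Finset.sum_le_sum key
    _ = (((S2 (n := n) m X).card : ℕ) : ℝ) := by
        rw [← Nat.cast_sum]
        congr 1
        exact (Finset.card_eq_sum_card_fiberwise
          (fun c hc => Rmap_mem_pi m X hc)).symm
    _ = _ := by norm_num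

end Assemble

/-! ### Dyadic counting -/

section Dyadic

variable {n : ℕ} (m X : ℕ)

/-- dyadic exponent vectors -/
def AA : Finset (EV n × Fin m → ℕ) :=
  (Fintype.piFinset fun _ => Finset.Iic (Nat.log 2 X)).filter
    (fun a => ∀ v, ∑ idx ∈ EvI m v, a idx ≤ Nat.log 2 X)

lemma log_mem_AA (hX : 2 ≤ X) {c : EV n × Fin m → ℕ} (hc : c ∈ S2 m X) :
    (fun idx => Nat.log 2 (c idx)) ∈ AA m X := by
  obtain ⟨hpi, hcon⟩ := Finset.mem_filter.mp hc
  have hcpos : ∀ idx, 1 ≤ c idx ∧ c idx ≤ X := by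
    intro idx
    exact Finset.mem_Icc.mp (Fintype.mem_piFinset.mp hpi idx)
  refine Finset.mem_filter.mpr ⟨?_, ?_⟩
  · rw [Fintype.mem_piFinset]
    intro idx
    exact Finset.mem_Iic.mpr (Nat.log_mono_right (hcpos idx).2)
  · intro v
    rw [Nat.le_log_iff_pow_le one_lt_two (by omega)]
    calc 2 ^ ∑ idx ∈ EvI m v, Nat.log 2 (c idx)
        = ∏ idx ∈ EvI m v, 2 ^ Nat.log 2 (c idx) :=
          (Finset.prod_pow_eq_pow_sum _ _ _).symm
      _ ≤ ∏ idx ∈ EvI m v, c idx :=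
          Finset.prod_le_prod' (fun idx _ => Nat.pow_log_le_self 2 (by have := (hcpos idx).1; omega))
      _ ≤ X := hcon v

set_option maxHeartbeats 1000000 in
lemma S2_card_le_sum (hX : 2 ≤ X) :
    (S2 (n := n) m X).card ≤ ∑ a ∈ AA (n := n) m X, 2 ^ (∑ idx, a idx) := by
  classical
  have hmapsto : ∀ c ∈ S2 (n := n) m X,
      (fun idx => Nat.log 2 (c idx)) ∈ AA (n := n) m X :=
    fun c hc => log_mem_AA m X hX hc
  have hfib := Finset.card_eq_sum_card_fiberwise
    (f := fun c idx => Nat.log 2 (c idx)) (s := S2 (n := n) m X) (t := AA (n := n) m X)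
    (fun c hc => hmapsto c hc)
  rw [hfib]
  apply Finset.sum_le_sum
  intro a ha
  have hsub : (S2 (n := n) m X).filter (fun c => (fun idx => Nat.log 2 (c idx)) = a)
      ⊆ Fintype.piFinset fun idx => Finset.Ico (2 ^ a idx) (2 ^ a idx * 2) := by
    intro c hc
    obtain ⟨hc1, hc2⟩ := Finset.mem_filter.mp hc
    obtain ⟨hpi, -⟩ := Finset.mem_filter.mp hc1
    rw [Fintype.mem_piFinset]
    intro idx
    have h1 : 1 ≤ c idx :=
      (Finset.mem_Icc.mp (Fintype.mem_piFinset.mp hpi idx)).1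
    have hlog : Nat.log 2 (c idx) = a idx := congrFun hc2 idx
    rw [Finset.mem_Ico, ← hlog]
    refine ⟨Nat.pow_log_le_self 2 (Nat.one_le_iff_ne_zero.mp h1), ?_⟩
    have h2 := Nat.lt_pow_succ_log_self one_lt_two (c idx)
    rw [pow_succ] at h2
    exact h2
  have hcard := Finset.card_le_card hsub
  have hpicard : (Fintype.piFinset fun idx : EV n × Fin m =>
      Finset.Ico (2 ^ a idx) (2 ^ a idx * 2)).card = 2 ^ (∑ idx, a idx) := by
    rw [Fintype.card_piFinset, ← Finset.prod_pow_eq_pow_sum]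
    apply Finset.prod_congr rfl
    intro idx _
    rw [Nat.card_Ico, mul_two, Nat.add_sub_cancel]
  rw [hpicard] at hcard
  exact hcard

end Dyadic

/-! ### The special edges and injectivity of the slack parametrization -/

section Spec

variable {n m : ℕ}

def specE (hn4 : 4 ≤ n) (v : Fin n) : EV n :=
  if h0 : v.val = 0 then ⟨(⟨0, by omega⟩, ⟨1, by omega⟩), by simp [Fin.lt_def]⟩
  else if h1 : v.val = 1 then ⟨(⟨1, by omega⟩, ⟨2, by omega⟩), by simp [Fin.lt_def]⟩
  else if h2 : v.val = 2 then ⟨(⟨0, by omega⟩, ⟨2, by omega⟩), by simp [Fin.lt_def]⟩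
  else ⟨(⟨0, by omega⟩, v), by simp [Fin.lt_def]; omega⟩

lemma specE_incid (hn4 : 4 ≤ n) (v w : Fin n) :
    ((specE hn4 w).1.1 = v ∨ (specE hn4 w).1.2 = v) ↔
      ((3 ≤ v.val ∧ w = v) ∨ (v.val = 0 ∧ (w.val = 0 ∨ w.val = 2 ∨ 3 ≤ w.val))
        ∨ (v.val = 1 ∧ (w.val = 0 ∨ w.val = 1))
        ∨ (v.val = 2 ∧ (w.val = 1 ∨ w.val = 2))) := by
  unfold specE
  split_ifs with h0 h1 h2 <;> simp [Fin.ext_iff] <;> omega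

lemma specE_inj (hn4 : 4 ≤ n) : Function.Injective (specE hn4) := by
  intro w w' h
  have h' := congrArg (fun e : EV n => ((e.1.1.val, e.1.2.val))) h
  unfold specE at h'
  apply Fin.ext
  split_ifs at h' <;> simp [Prod.ext_iff] at h' <;> omega

def spec (hn4 : 4 ≤ n) (hm : 0 < m) (w : Fin n) : EV n × Fin m :=
  (specE hn4 w, ⟨0, hm⟩)

lemma spec_inj (hn4 : 4 ≤ n) (hm : 0 < m) : Function.Injective (spec hn4 hm) :=
  fun w w' h => specE_inj hn4 (congrArg Prod.fst h)

lemma inj_core (hn4 : 4 ≤ n) (hm : 0 < m) (a a' : EV n × Fin m → ℕ)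
    (hv : ∀ v, ∑ idx ∈ EvI m v, a idx = ∑ idx ∈ EvI m v, a' idx)
    (hoff : ∀ idx, idx ∉ Finset.univ.image (spec hn4 hm) → a idx = a' idx) :
    a = a' := by
  classical
  set δ : EV n × Fin m → ℤ := fun idx => (a idx : ℤ) - a' idx with hδ
  have hδ0 : ∀ idx, idx ∉ Finset.univ.image (spec hn4 hm) → δ idx = 0 := by
    intro idx h; rw [hδ]; simp [hoff idx h]
  have hδv : ∀ v, ∑ idx ∈ EvI m v, δ idx = 0 := by
    intro v
    have h2 : ((∑ idx ∈ EvI m v, a idx : ℕ) : ℤ)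
        = ((∑ idx ∈ EvI m v, a' idx : ℕ) : ℤ) := by
      exact_mod_cast congrArg (Nat.cast : ℕ → ℤ) (hv v)
    push_cast at h2
    rw [hδ]
    simp only
    rw [Finset.sum_sub_distrib, h2, sub_self]
  -- reduce the vertex sums to sums over special indices
  have HH : ∀ v : Fin n,
      ∑ w ∈ Finset.univ.filter
        (fun w => (specE hn4 w).1.1 = v ∨ (specE hn4 w).1.2 = v),
        δ (spec hn4 hm w) = 0 := by
    intro v
    rw [← hδv v]
    have hsub : Finset.image (spec hn4 hm) (Finset.univ.filter
        (fun w => (specE hn4 w).1.1 = v ∨ (specE hn4 w).1.2 = v)) ⊆ EvI m v := by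
      intro idx hidx
      obtain ⟨w, hw, rfl⟩ := Finset.mem_image.mp hidx
      obtain ⟨-, hw2⟩ := Finset.mem_filter.mp hw
      exact Finset.mem_product.mpr ⟨Finset.mem_filter.mpr ⟨Finset.mem_univ _, hw2⟩,
        Finset.mem_univ _⟩
    rw [← Finset.sum_image (f := δ)
      (fun x _ y _ hxy => spec_inj hn4 hm hxy)]
    apply Finset.sum_subset hsub
    intro idx hidx hnot
    apply hδ0
    intro hc
    obtain ⟨w, -, rfl⟩ := Finset.mem_image.mp hc
    apply hnot
    apply Finset.mem_image.mpr
    refine ⟨w, Finset.mem_filter.mpr ⟨Finset.mem_univ _, ?_⟩, rfl⟩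
    have := Finset.mem_product.mp hidx
    have h2 := Finset.mem_filter.mp this.1
    exact h2.2
  -- values at high special indices vanish
  have hhigh : ∀ w : Fin n, 3 ≤ w.val → δ (spec hn4 hm w) = 0 := by
    intro w hw
    have := HH w
    have hfil : Finset.univ.filter
        (fun w' => (specE hn4 w').1.1 = w ∨ (specE hn4 w').1.2 = w)
        = {w} := by
      ext w'
      simp only [Finset.mem_filter, Finset.mem_univ, true_and, Finset.mem_singleton,
        specE_incid hn4 w w']
      constructor
      · rintro (⟨-, h⟩ | ⟨h, -⟩ | ⟨h, -⟩ | ⟨h, -⟩)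
        · exact h
        · omega
        · omega
        · omega
      · intro h
        exact Or.inl ⟨hw, h⟩
    rw [hfil, Finset.sum_singleton] at this
    exact this
  -- the three low vertices
  have f0 : Fin n := ⟨0, by omega⟩
  set v0 : Fin n := ⟨0, by omega⟩ with hv0
  set v1 : Fin n := ⟨1, by omega⟩ with hv1
  set v2 : Fin n := ⟨2, by omega⟩ with hv2
  have hfil1 : Finset.univ.filter
      (fun w => (specE hn4 w).1.1 = v1 ∨ (specE hn4 w).1.2 = v1) = {v0, v1} := by
    ext w
    simp only [Finset.mem_filter, Finset.mem_univ, true_and, specE_incid hn4 v1 w]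
    simp only [Finset.mem_insert, Finset.mem_singleton, hv0, hv1, hv2, Fin.ext_iff,
      Fin.val_mk]
    simp only [true_and]
    omega
  have hfil2 : Finset.univ.filter
      (fun w => (specE hn4 w).1.1 = v2 ∨ (specE hn4 w).1.2 = v2) = {v1, v2} := by
    ext w
    simp only [Finset.mem_filter, Finset.mem_univ, true_and, specE_incid hn4 v2 w]
    simp only [Finset.mem_insert, Finset.mem_singleton, hv0, hv1, hv2, Fin.ext_iff,
      Fin.val_mk]
    simp only [true_and]
    omega
  have E1 : δ (spec hn4 hm v0) + δ (spec hn4 hm v1) = 0 := by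
    have := HH v1
    rw [hfil1] at this
    rwa [Finset.sum_insert (by simp [hv0, hv1, Fin.ext_iff]), Finset.sum_singleton]
      at this
  have E2 : δ (spec hn4 hm v1) + δ (spec hn4 hm v2) = 0 := by
    have := HH v2
    rw [hfil2] at this
    rwa [Finset.sum_insert (by simp [hv1, hv2, Fin.ext_iff]), Finset.sum_singleton]
      at this
  have E0 : δ (spec hn4 hm v0) + δ (spec hn4 hm v2) = 0 := by
    have h := HH v0
    have hsub2 : ({v0, v2} : Finset (Fin n)) ⊆ Finset.univ.filter
        (fun w => (specE hn4 w).1.1 = v0 ∨ (specE hn4 w).1.2 = v0) := by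
      intro w hw
      rw [Finset.mem_insert, Finset.mem_singleton] at hw
      refine Finset.mem_filter.mpr ⟨Finset.mem_univ _, ?_⟩
      rw [specE_incid hn4 v0 w]
      rcases hw with rfl | rfl
      · right; left; exact ⟨rfl, Or.inl rfl⟩
      · right; left; exact ⟨rfl, Or.inr (Or.inl rfl)⟩
    have h2 : ∑ w ∈ ({v0, v2} : Finset (Fin n)), δ (spec hn4 hm w) = 0 := by
      rw [← h]
      apply Finset.sum_subset hsub2
      intro w hw hnot
      rw [Finset.mem_filter, specE_incid hn4 v0 w] at hw
      rw [Finset.mem_insert, Finset.mem_singleton] at hnot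
      apply hhigh
      simp only [hv0, hv1, hv2, Fin.ext_iff] at hnot hw ⊢
      omega
    rwa [Finset.sum_insert (by simp [hv0, hv2, Fin.ext_iff]), Finset.sum_singleton]
      at h2
  have hall : ∀ w : Fin n, δ (spec hn4 hm w) = 0 := by
    intro w
    by_cases h3 : 3 ≤ w.val
    · exact hhigh w h3
    · have hcase : w = v0 ∨ w = v1 ∨ w = v2 := by
        simp only [hv0, hv1, hv2, Fin.ext_iff]
        omega
      rcases hcase with rfl | rfl | rfl <;> omega
  funext idx
  by_cases hidx : idx ∈ Finset.univ.image (spec hn4 hm)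
  · obtain ⟨w, -, rfl⟩ := Finset.mem_image.mp hidx
    have := hall w
    rw [hδ] at this
    simp only at this
    omega
  · exact hoff idx hidx

end Spec

/-! ### Final counting -/

section FinalCount

lemma geom_bound (L : ℕ) : ∑ j ∈ Finset.Iic L, ((Real.sqrt 2)⁻¹) ^ j ≤ 4 := by
  have h2 : Real.sqrt 2 ^ 2 = 2 := Real.sq_sqrt (by norm_num)
  have hpos : 0 < Real.sqrt 2 := Real.sqrt_pos.mpr (by norm_num)
  set r : ℝ := (Real.sqrt 2)⁻¹ with hr
  have hr0 : 0 < r := by positivity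
  have hsq : (4:ℝ)/3 ≤ Real.sqrt 2 := by nlinarith
  have hr34 : r ≤ 3/4 := by
    rw [hr, inv_le_comm₀ hpos (by norm_num)]
    linarith
  have hrange : Finset.Iic L = Finset.range (L+1) := by
    ext j; simp [Nat.lt_succ_iff]
  rw [hrange, geom_sum_eq (by intro h; rw [h] at hr34; norm_num at hr34) (L+1)]
  have hpowpos : 0 < r ^ (L+1) := pow_pos hr0 _
  have hpow1 : r ^ (L+1) ≤ 1 := pow_le_one₀ (le_of_lt hr0) (by linarith)
  have h1r : (0:ℝ) < 1 - r := by linarith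
  rw [div_le_iff_of_neg (by linarith : r - 1 < 0)]
  nlinarith

variable {n : ℕ}

lemma sum_EvI (m : ℕ) (g : EV n × Fin m → ℕ) :
    ∑ v : Fin n, ∑ idx ∈ EvI m v, g idx = 2 * ∑ idx : EV n × Fin m, g idx := by
  have h1 : ∀ v : Fin n, ∑ idx ∈ EvI m v, g idx
      = ∑ e ∈ EdgesAt v, ∑ r : Fin m, g (e, r) := by
    intro v
    rw [EvI, Finset.sum_product]
  simp only [h1]
  rw [sum_edgesAt_sum (fun e => ∑ r : Fin m, g (e, r))]
  rw [Fintype.sum_prod_type]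

set_option maxHeartbeats 1600000 in
lemma S2_card_bound (k m X : ℕ) (hk : 2 ≤ k) (hm : 1 ≤ m) (hX : 2 ≤ X) :
    ((S2 (n := 2*k) m X).card : ℝ)
      ≤ 4 ^ (2*k) * (2:ℝ) ^ (k * Nat.log 2 X)
        * ((Nat.log 2 X : ℝ) + 1) ^ (Fintype.card (EV (2*k) × Fin m) - 2*k) := by
  classical
  set n := 2*k with hn
  have hn4 : 4 ≤ n := by omega
  have hm' : 0 < m := hm
  set L := Nat.log 2 X with hL
  set I := EV n × Fin m
  set Sspec : Finset I := Finset.univ.image (spec hn4 hm') with hSspec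
  set σ : (I → ℕ) → (Fin n → ℕ) := fun a v => L - ∑ idx ∈ EvI m v, a idx with hσ
  set msk : (I → ℕ) → (I → ℕ) :=
    fun a idx => if idx ∈ Sspec then 0 else a idx with hmsk
  set r : ℝ := (Real.sqrt 2)⁻¹ with hr
  have h2 : Real.sqrt 2 ^ 2 = 2 := Real.sq_sqrt (by norm_num)
  have hs2pos : 0 < Real.sqrt 2 := Real.sqrt_pos.mpr (by norm_num)
  have hr0 : 0 < r := by rw [hr]; positivity
  -- step 1 : dyadic bound
  have h1 : ((S2 (n := n) m X).card : ℝ) ≤ ∑ a ∈ AA (n := n) m X, (2:ℝ) ^ (∑ idx, a idx) := by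
    have := S2_card_le_sum (n := n) m X hX
    calc ((S2 (n := n) m X).card : ℝ)
        ≤ ((∑ a ∈ AA (n := n) m X, 2 ^ (∑ idx, a idx) : ℕ) : ℝ) := Nat.cast_le.mpr this
      _ = _ := by push_cast; rfl
  -- step 2 : pointwise factorization
  have key : ∀ a ∈ AA (n := n) m X,
      (2:ℝ) ^ (∑ idx, a idx) = (2:ℝ) ^ (k * L) * ∏ v : Fin n, r ^ (σ a v) := by
    intro a ha
    obtain ⟨hapi, hacon⟩ := Finset.mem_filter.mp ha
    have hvsum : ∀ v, ∑ idx ∈ EvI m v, a idx + σ a v = L := by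
      intro v
      have hle := hacon v
      rw [hσ]
      simp only
      omega
    have hdouble : ∑ v : Fin n, ∑ idx ∈ EvI m v, a idx = 2 * ∑ idx, a idx :=
      sum_EvI m a
    have htot : 2 * (∑ idx, a idx) + (∑ v, σ a v) = n * L := by
      have := Finset.sum_congr rfl (fun v (_ : v ∈ Finset.univ) => hvsum v)
      rw [Finset.sum_add_distrib, hdouble] at this
      simpa using this
    have hids : (Real.sqrt 2) ^ (2 * (∑ idx, a idx) + (∑ v, σ a v))
        = (2:ℝ) ^ (∑ idx, a idx) * (Real.sqrt 2) ^ (∑ v, σ a v) := by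
      rw [pow_add, pow_mul, h2]
    have hids2 : (Real.sqrt 2) ^ (n * L) = (2:ℝ) ^ (k * L) := by
      rw [hn, show 2 * k * L = 2 * (k * L) by ring, pow_mul, h2]
    have heq : (2:ℝ) ^ (∑ idx, a idx) * (Real.sqrt 2) ^ (∑ v, σ a v)
        = (2:ℝ) ^ (k * L) := by rw [← hids, htot, hids2]
    have hprod : ∏ v : Fin n, r ^ (σ a v) = r ^ (∑ v, σ a v) :=
      Finset.prod_pow_eq_pow_sum _ _ _
    rw [hprod, hr, inv_pow]
    rw [eq_comm, mul_inv_eq_iff_eq_mul₀ (by positivity)]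
    exact heq.symm
  -- step 3 : injection into the product set
  set B : Finset (I → ℕ) := Fintype.piFinset
    (fun idx => if idx ∈ Sspec then ({0} : Finset ℕ) else Finset.Iic L) with hB
  set W : Finset ((Fin n → ℕ) × (I → ℕ)) :=
    (Fintype.piFinset fun _ : Fin n => Finset.Iic L) ×ˢ B with hW
  have hρmem : ∀ a ∈ AA (n := n) m X, (σ a, msk a) ∈ W := by
    intro a ha
    obtain ⟨hapi, hacon⟩ := Finset.mem_filter.mp ha
    rw [hW, Finset.mem_product]
    constructor
    · rw [Fintype.mem_piFinset]
      intro v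
      exact Finset.mem_Iic.mpr (Nat.sub_le _ _)
    · rw [hB, Fintype.mem_piFinset]
      intro idx
      rw [hmsk]
      simp only
      split_ifs with h
      · simp
      · exact Fintype.mem_piFinset.mp hapi idx
  have hρinj : Set.InjOn (fun a => (σ a, msk a)) (AA (n := n) m X) := by
    intro a ha a' ha' heq
    obtain ⟨hapi, hacon⟩ := Finset.mem_filter.mp ha
    obtain ⟨hapi', hacon'⟩ := Finset.mem_filter.mp ha'
    have hσeq : σ a = σ a' := congrArg Prod.fst heq
    have hmeq : msk a = msk a' := congrArg Prod.snd heq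
    apply inj_core hn4 hm'
    · intro v
      have h1 := congrFun hσeq v
      rw [hσ] at h1
      simp only at h1
      have h2 := hacon v
      have h3 := hacon' v
      omega
    · intro idx hidx
      have h1 := congrFun hmeq idx
      rw [hmsk] at h1
      simp only [hSspec, if_neg hidx] at h1
      exact h1
  have h3 : (∑ a ∈ AA (n := n) m X, ∏ v : Fin n, r ^ (σ a v))
      ≤ ∑ w ∈ W, ∏ v : Fin n, r ^ (w.1 v) := by
    have himg : ∑ a ∈ AA (n := n) m X, ∏ v : Fin n, r ^ (σ a v)
        = ∑ w ∈ (AA (n := n) m X).image (fun a => (σ a, msk a)),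
            ∏ v : Fin n, r ^ (w.1 v) := by
      rw [Finset.sum_image (fun x hx y hy hxy => hρinj hx hy hxy)]
    rw [himg]
    apply Finset.sum_le_sum_of_subset_of_nonneg
    · intro w hw
      obtain ⟨a, ha, rfl⟩ := Finset.mem_image.mp hw
      exact hρmem a ha
    · intro w _ _
      positivity
  -- step 4 : evaluate the sum over W
  have h4 : (∑ w ∈ W, ∏ v : Fin n, r ^ (w.1 v))
      ≤ (4:ℝ) ^ n * ((L:ℝ) + 1) ^ (Fintype.card I - n) := by
    rw [hW, Finset.sum_product]
    have hconst : ∀ s : Fin n → ℕ, ∑ _f ∈ B, ∏ v : Fin n, r ^ (s v)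
        = (B.card : ℝ) * ∏ v : Fin n, r ^ (s v) := by
      intro s
      rw [Finset.sum_const, nsmul_eq_mul]
    simp only [hconst]
    rw [← Finset.mul_sum]
    have hBcard : (B.card : ℝ) = ((L:ℝ) + 1) ^ (Fintype.card I - n) := by
      have hnat : B.card = (L + 1) ^ (Fintype.card I - n) := by
        rw [hB, Fintype.card_piFinset]
        have hcards : ∀ idx : I, ((if idx ∈ Sspec then ({0} : Finset ℕ)
            else Finset.Iic L)).card = if idx ∈ Sspec then 1 else L + 1 := by
          intro idx
          split_ifs <;> simp
        simp only [hcards]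
        rw [Finset.prod_ite, Finset.prod_const_one, one_mul, Finset.prod_const]
        congr 1
        have hflt : Finset.univ.filter (fun idx : I => ¬ idx ∈ Sspec)
            = Finset.univ \ Sspec := by
          ext idx; simp
        rw [hflt, Finset.card_sdiff_of_subset (Finset.subset_univ _), Finset.card_univ]
        congr 1
        rw [hSspec, Finset.card_image_of_injective _ (spec_inj hn4 hm'),
          Finset.card_univ, Fintype.card_fin]
      rw [hnat]
      push_cast
      ring
    have hsum4 : (∑ s ∈ Fintype.piFinset (fun _ : Fin n => Finset.Iic L),
        ∏ v : Fin n, r ^ (s v)) ≤ (4:ℝ) ^ n := by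
      rw [← Finset.prod_univ_sum]
      calc ∏ _v : Fin n, ∑ j ∈ Finset.Iic L, r ^ j
          ≤ ∏ _v : Fin n, (4:ℝ) := by
            apply Finset.prod_le_prod
            · intro v _
              apply Finset.sum_nonneg
              intro j _
              positivity
            · intro v _
              exact geom_bound L
        _ = (4:ℝ) ^ n := by
            rw [Finset.prod_const, Finset.card_univ, Fintype.card_fin]
    rw [hBcard]
    calc ((L:ℝ) + 1) ^ (Fintype.card I - n)
          * ∑ s ∈ Fintype.piFinset (fun _ : Fin n => Finset.Iic L),
            ∏ v : Fin n, r ^ (s v)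
        ≤ ((L:ℝ) + 1) ^ (Fintype.card I - n) * (4:ℝ) ^ n := by
          apply mul_le_mul_of_nonneg_left hsum4
          positivity
      _ = (4:ℝ) ^ n * ((L:ℝ) + 1) ^ (Fintype.card I - n) := by ring
  -- assemble
  calc ((S2 (n := n) m X).card : ℝ)
      ≤ ∑ a ∈ AA (n := n) m X, (2:ℝ) ^ (∑ idx, a idx) := h1
    _ = ∑ a ∈ AA (n := n) m X, (2:ℝ) ^ (k * L) * ∏ v : Fin n, r ^ (σ a v) :=
        Finset.sum_congr rfl key
    _ = (2:ℝ) ^ (k * L) * ∑ a ∈ AA (n := n) m X, ∏ v : Fin n, r ^ (σ a v) := by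
        rw [Finset.mul_sum]
    _ ≤ (2:ℝ) ^ (k * L) * ((4:ℝ) ^ n * ((L:ℝ) + 1) ^ (Fintype.card I - n)) := by
        apply mul_le_mul_of_nonneg_left (le_trans h3 h4)
        positivity
    _ = 4 ^ n * (2:ℝ) ^ (k * L) * ((L:ℝ) + 1) ^ (Fintype.card I - n) := by
        ring

end FinalCount

end Stmt16Aux

/-- For `k ≥ 2` and `m ≥ 1`,
`∑_{n₁,…,n_{2k} ≤ x, n₁⋯n_{2k} = □} μ²(n₁)⋯μ²(n_{2k}) m^{(ω(n₁)+⋯+ω(n_{2k}))/2}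
  ≪_{k,m} x^k (log x)^{m·C(2k,2) - 2k}`. -/
theorem stmt16 (k m : ℕ) (hk : 2 ≤ k) (hm : 1 ≤ m) :
    ∃ C : ℝ, 0 < C ∧ ∀ x : ℝ, 2 ≤ x →
      (∑ t ∈ Fintype.piFinset (fun _ : Fin (2 * k) => Finset.Icc 1 ⌊x⌋₊),
        if IsSquare (∏ i, t i) then
          (∏ i, if Squarefree (t i) then (1 : ℝ) else 0) *
            (m : ℝ) ^ ((∑ i, (t i).primeFactors.card) / 2)
        else 0) ≤
      C * x ^ k * Real.log x ^ ((m * (2 * k).choose 2 : ℝ) - 2 * k) := by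
  classical
  set N := (2 * k).choose 2 with hN
  set D := Fintype.card (Stmt16Aux.EV (2 * k) × Fin m) with hD
  have hDval : D = N * m := by
    rw [hD, Fintype.card_prod, Stmt16Aux.card_EV, Fintype.card_fin, hN]
  have hNk : 2 * k ≤ N := by
    rw [hN, Nat.choose_two_right]
    have h1 : 2 * k * (2 * k - 1) = 2 * (k * (2 * k - 1)) := by ring
    rw [h1, Nat.mul_div_cancel_left _ (by norm_num : 0 < 2)]
    calc 2 * k ≤ 3 * k := by omega
      _ ≤ k * (2 * k - 1) := by
          have h2 : 3 ≤ 2 * k - 1 := by omega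
          calc 3 * k = k * 3 := by ring
            _ ≤ k * (2 * k - 1) := Nat.mul_le_mul_left k h2
  have hD2k : 2 * k ≤ D := by
    rw [hDval]
    calc 2 * k ≤ N := hNk
      _ ≤ N * m := Nat.le_mul_of_pos_right N hm
  set E := D - 2 * k with hE
  have hlog2pos : (0:ℝ) < Real.log 2 := Real.log_pos (by norm_num)
  set c₀ : ℝ := 2 / Real.log 2 with hc₀
  have hc₀pos : 0 < c₀ := by positivity
  refine ⟨4 ^ (2 * k) * c₀ ^ E, by positivity, ?_⟩
  intro x hx
  set X := ⌊x⌋₊ with hX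
  have hX2 : 2 ≤ X := Nat.le_floor (by exact_mod_cast hx)
  have hXx : (X : ℝ) ≤ x := Nat.floor_le (by linarith)
  set L := Nat.log 2 X with hL
  have hlogxpos : 0 < Real.log x := Real.log_pos (by linarith)
  -- main chain
  have step1 := Stmt16Aux.sum_le_S2_card (n := 2 * k) m X hm
  have step2 := Stmt16Aux.S2_card_bound k m X hk hm hX2
  -- bound 2^(kL) by x^k
  have hpow2 : (2:ℝ) ^ (k * L) ≤ x ^ k := by
    have h1 : (2:ℝ) ^ L ≤ x := by
      have h2 : (2:ℕ) ^ L ≤ X := Nat.pow_log_le_self 2 (by omega)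
      calc (2:ℝ) ^ L = ((2 ^ L : ℕ) : ℝ) := by push_cast; ring
        _ ≤ (X:ℝ) := Nat.cast_le.mpr h2
        _ ≤ x := hXx
    calc (2:ℝ) ^ (k * L) = ((2:ℝ) ^ L) ^ k := by rw [← pow_mul, mul_comm]
      _ ≤ x ^ k := pow_le_pow_left₀ (by positivity) h1 k
  -- bound L + 1 by c₀ log x
  have hL1 : ((L:ℝ) + 1) ≤ c₀ * Real.log x := by
    have h1 : (2:ℝ) ^ L ≤ x := by
      have h2 : (2:ℕ) ^ L ≤ X := Nat.pow_log_le_self 2 (by omega)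
      calc (2:ℝ) ^ L = ((2 ^ L : ℕ) : ℝ) := by push_cast; ring
        _ ≤ (X:ℝ) := Nat.cast_le.mpr h2
        _ ≤ x := hXx
    have h3 : (L:ℝ) * Real.log 2 ≤ Real.log x := by
      calc (L:ℝ) * Real.log 2 = Real.log ((2:ℝ) ^ L) := by
            rw [Real.log_pow]
        _ ≤ Real.log x := Real.log_le_log (by positivity) h1
    have h4 : Real.log 2 ≤ Real.log x := Real.log_le_log (by norm_num) hx
    rw [hc₀]
    rw [div_mul_eq_mul_div, le_div_iff₀ hlog2pos]
    nlinarith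
  have hstep3 : (((Stmt16Aux.S2 (n := 2*k) m X).card : ℕ) : ℝ)
      ≤ 4 ^ (2*k) * (x ^ k) * (c₀ * Real.log x) ^ E := by
    calc (((Stmt16Aux.S2 (n := 2*k) m X).card : ℕ) : ℝ)
        ≤ 4 ^ (2*k) * (2:ℝ) ^ (k * L) * ((L:ℝ) + 1) ^ E := by
          exact step2
      _ ≤ 4 ^ (2*k) * (x ^ k) * (c₀ * Real.log x) ^ E := by
          apply mul_le_mul
          · exact mul_le_mul_of_nonneg_left hpow2 (by positivity)
          · exact pow_le_pow_left₀ (by positivity) hL1 E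
          · positivity
          · positivity
  have hfinal : (c₀ * Real.log x) ^ E
      = c₀ ^ E * Real.log x ^ ((m * N : ℝ) - 2 * k) := by
    rw [mul_pow]
    congr 1
    have h1 : Real.log x ^ (E : ℕ) = Real.log x ^ ((E : ℕ) : ℝ) :=
      (Real.rpow_natCast _ _).symm
    rw [h1]
    congr 1
    have hle : 2 * k ≤ N * m := hDval ▸ hD2k
    rw [hE, hDval, Nat.cast_sub hle]
    push_cast
    ring
  calc (∑ t ∈ Fintype.piFinset (fun _ : Fin (2 * k) => Finset.Icc 1 ⌊x⌋₊),
        if IsSquare (∏ i, t i) then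
          (∏ i, if Squarefree (t i) then (1 : ℝ) else 0) *
            (m : ℝ) ^ ((∑ i, (t i).primeFactors.card) / 2)
        else 0)
      ≤ ((Stmt16Aux.S2 (n := 2*k) m X).card : ℝ) := step1
    _ ≤ 4 ^ (2*k) * (x ^ k) * (c₀ * Real.log x) ^ E := hstep3
    _ = 4 ^ (2 * k) * c₀ ^ E * x ^ k * Real.log x ^ ((m * N : ℝ) - 2 * k) := by
        rw [hfinal]; ring
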